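/- Let p be a prime, j ∈ {1, ..., p-1}, and s, a integers with p^2·a + s ≥ 0. If the binomial coefficient C(s, p^2 - j) ≡ 0 (mod p), then for all positive integers m and λ, the binomial coefficient C(p^2·a + s, p^λ·m - j) ≡ 0 (mod p^(λ-1)). -/

import Mathlib

/-- If `1 ≤ j ≤ P` and `1 ≤ t`, then `(P*t - j) % P = P - j`. -/
lemma aux_mod_sub (P t j : ℕ) (ht : 1 ≤ t) (hj1 : 1 ≤ j) (hjP : j ≤ P) :
    (P * t - j) % P = P - j := by
  obtain ⟨t', rfl⟩ : ∃ t', t = t' + 1 := ⟨t - 1, by omega⟩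
  have h1 : P * (t' + 1) - j = P * t' + (P - j) := by
    have : P * (t' + 1) = P * t' + P := by ring
    omega
  rw [h1, Nat.mul_add_mod, Nat.mod_eq_of_lt (by omega)]

/-- Carry characterization: adding `k` and `n - k` produces a carry past `P`
iff `n % P < k % P`. -/
lemma aux_carry_iff (P n k : ℕ) (hP : 0 < P) (hkn : k ≤ n) :
    P ≤ k % P + (n - k) % P ↔ n % P < k % P := by
  have h1 : k % P < P := Nat.mod_lt _ hP
  have h2 : (n - k) % P < P := Nat.mod_lt _ hP
  have h3 : (k % P + (n - k) % P) % P = n % P := by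
    conv_lhs => rw [Nat.add_comm]
    conv_rhs => rw [← Nat.sub_add_cancel hkn, Nat.add_mod]
  rcases lt_or_ge (k % P + (n - k) % P) P with hc | hc
  · have := Nat.mod_eq_of_lt hc
    omega
  · have h4 : (k % P + (n - k) % P) % P = k % P + (n - k) % P - P := by
      rw [Nat.mod_eq_sub_mod hc, Nat.mod_eq_of_lt (by omega)]
    omega

/-- Lemma 4.10 (combinatorial core): if `p` is prime, `1 ≤ j ≤ p - 1` and
`p ∣ C(s, p² - j)`, then `p^(λ-1) ∣ C(p²a + s, p^λ m - j)` for all positive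
integers `m, λ`. -/
theorem stmt_10 (p s a j : ℕ) (hp : p.Prime) (hj1 : 1 ≤ j) (hj : j ≤ p - 1)
    (hdiv : p ∣ Nat.choose s (p ^ 2 - j)) :
    ∀ m lam : ℕ, 0 < m → 0 < lam →
      p ^ (lam - 1) ∣ Nat.choose (p ^ 2 * a + s) (p ^ lam * m - j) := by
  intro m lam hm hlam
  haveI : Fact p.Prime := ⟨hp⟩
  have hp2 : 2 ≤ p := hp.two_le
  have hjp : j < p := by omega
  have hp2pos : 0 < p ^ 2 := Nat.pow_pos (by omega)
  have hjp2 : j < p ^ 2 := lt_of_lt_of_le hjp (Nat.le_self_pow two_ne_zero p)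
  set n := p ^ 2 * a + s with hn
  set k := p ^ lam * m - j with hk
  rcases lt_or_ge n k with hnk | hkn
  · rw [Nat.choose_eq_zero_of_lt hnk]
    exact dvd_zero _
  -- key claim from the hypothesis: `s % p^2 < p^2 - j`
  have hkey : s % p ^ 2 < p ^ 2 - j := by
    by_contra hge
    push_neg at hge
    have hsmod : s % p ^ 2 < p ^ 2 := Nat.mod_lt _ hp2pos
    set j2 := p ^ 2 - s % p ^ 2 with hj2
    have hj2j : 1 ≤ j2 ∧ j2 ≤ j := by omega
    have hsj2 : s % p ^ 2 = p ^ 2 - j2 := by omega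
    have hks : p ^ 2 - j ≤ s := le_trans (by omega) (Nat.mod_le s (p ^ 2))
    -- show `p` does not divide the binomial coefficient, contradiction
    have hval : padicValNat p (Nat.choose s (p ^ 2 - j)) = 0 := by
      rw [padicValNat_choose hks (Nat.lt_succ_self _), Finset.card_eq_zero,
        Finset.filter_eq_empty_iff]
      intro i hi
      rw [Finset.mem_Ico] at hi
      have hpipos : 0 < p ^ i := Nat.pow_pos (by omega)
      rw [aux_carry_iff _ _ _ hpipos hks]
      push_neg
      rcases Nat.lt_or_ge i 2 with hi2 | hi2
      · -- i = 1
        have hi1 : i = 1 := by omega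
        subst hi1
        have e1 : (p ^ 2 - j) % p ^ 1 = p - j := by
          have : p ^ 2 = p ^ 1 * p := by ring
          rw [this, aux_mod_sub _ _ _ (by omega) hj1 (by simpa using hjp.le)]
          simp [pow_one]
        have e2 : s % p ^ 1 = p - j2 := by
          have hsd : s % p ^ 1 = (s % p ^ 2) % p ^ 1 :=
            (Nat.mod_mod_of_dvd s (pow_dvd_pow p one_le_two)).symm
          have : p ^ 2 = p ^ 1 * p := by ring
          rw [hsd, hsj2, this, aux_mod_sub _ _ _ (by omega) (by omega)
            (by simp [pow_one]; omega)]
          simp [pow_one]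
        rw [e1, e2]
        omega
      · -- i ≥ 2
        have e1 : (p ^ 2 - j) % p ^ i = p ^ 2 - j :=
          Nat.mod_eq_of_lt (lt_of_lt_of_le (by omega) (Nat.pow_le_pow_right (by omega) hi2))
        have e2 : s % p ^ 2 = (s % p ^ i) % p ^ 2 :=
          (Nat.mod_mod_of_dvd s (pow_dvd_pow p hi2)).symm
        have : (s % p ^ i) % p ^ 2 ≤ s % p ^ i := Nat.mod_le _ _
        rw [e1]
        omega
    have hCpos : 0 < Nat.choose s (p ^ 2 - j) := Nat.choose_pos hks
    have := (hp.pow_dvd_iff_le_factorization hCpos.ne').1 (by rwa [pow_one])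
    rw [Nat.factorization_def _ hp] at this
    omega
  -- main computation via Kummer's theorem
  have hCpos : 0 < Nat.choose n k := Nat.choose_pos hkn
  set b := max (Nat.log p n + 1) (lam + 1) with hb
  have hnb : Nat.log p n < b := lt_of_lt_of_le (Nat.lt_succ_self _) (le_max_left _ _)
  rw [hp.pow_dvd_iff_le_factorization hCpos.ne', Nat.factorization_def _ hp,
    padicValNat_choose hkn hnb]
  have hsub : Finset.Ico 2 (lam + 1) ⊆
      (Finset.Ico 1 b).filter fun i => p ^ i ≤ k % p ^ i + (n - k) % p ^ i := by
    intro i hi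
    rw [Finset.mem_Ico] at hi
    have hilam : i ≤ lam := by omega
    have hpipos : 0 < p ^ i := Nat.pow_pos (by omega)
    have hjpi : j ≤ p ^ i := le_trans hjp.le (Nat.le_self_pow (by omega) p)
    rw [Finset.mem_filter, Finset.mem_Ico]
    refine ⟨⟨by omega, lt_of_lt_of_le (by omega) (le_max_right _ _)⟩, ?_⟩
    rw [aux_carry_iff _ _ _ hpipos hkn]
    -- k % p^i = p^i - j
    have ek : k % p ^ i = p ^ i - j := by
      have hpow : p ^ lam * m = p ^ i * (p ^ (lam - i) * m) := by
        rw [← mul_assoc, ← pow_add]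
        congr 2
        omega
      rw [hk, hpow, aux_mod_sub _ _ _
        (Nat.one_le_iff_ne_zero.2 (by positivity)) hj1 hjpi]
    rw [ek]
    -- show n % p^i < p^i - j
    by_contra hge
    push_neg at hge
    have hnmod : n % p ^ i < p ^ i := Nat.mod_lt _ hpipos
    set j3 := p ^ i - n % p ^ i with hj3
    have hj3j : 1 ≤ j3 ∧ j3 ≤ j := by omega
    have en : n % p ^ i = p ^ i - j3 := by omega
    have e2 : n % p ^ 2 = (n % p ^ i) % p ^ 2 :=
      (Nat.mod_mod_of_dvd n (pow_dvd_pow p hi.1)).symm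
    have e3 : (p ^ i - j3) % p ^ 2 = p ^ 2 - j3 := by
      have hpow : p ^ i = p ^ 2 * p ^ (i - 2) := by
        rw [← pow_add]
        congr 1
        omega
      rw [hpow, aux_mod_sub _ _ _ (Nat.one_le_iff_ne_zero.2 (by positivity))
        (by omega) (by omega)]
    have e4 : n % p ^ 2 = s % p ^ 2 := by
      rw [hn, Nat.add_comm, Nat.add_mul_mod_self_left]
    have e5 : s % p ^ 2 = p ^ 2 - j3 := by rw [← e4, e2, en, e3]
    omega
  calc lam - 1 = (Finset.Ico 2 (lam + 1)).card := by rw [Nat.card_Ico]; omega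
    _ ≤ _ := Finset.card_le_card hsub
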